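/- (Ω(T/|K|) comparison.) Let g₁, …, g_T : Ω → ℝ^d be random vectors on a probability space with E‖gᵢ‖² < ∞, let P⊥ be the orthogonal projection onto a subspace W of ℝ^d, and assume the projected noise components are pairwise uncorrelated: E⟨P⊥ gᵢ, P⊥ gⱼ⟩ = 0 for all i ≠ j. Let K ⊆ {1, …, T} be nonempty, and assume E‖P⊥ gᵢ‖² ≥ ν² for every i ∉ K, 0 < E‖P⊥ gᵢ‖² ≤ σ̄² for every i ∈ K, and ν² ≥ σ̄². Then E‖P⊥ ∑_{i=1}^T gᵢ‖² / E‖P⊥ ∑_{i ∈ K} gᵢ‖² ≥ T / |K|, so the expected-noise ratio between sequence-level and token-level unlearning is at least T/|K|. -/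

import Mathlib

open MeasureTheory Finset
open scoped RealInnerProductSpace BigOperators

/-- The orthogonal projection onto a subspace `W` of `ℝ^d`, viewed as a map `ℝ^d → ℝ^d`. -/
noncomputable def Pproj {d : ℕ} (W : Submodule ℝ (EuclideanSpace ℝ (Fin d))) :
    EuclideanSpace ℝ (Fin d) →L[ℝ] EuclideanSpace ℝ (Fin d) :=
  W.subtypeL.comp (W.orthogonalProjectionOnto)
/-- Ω(T/|K|) comparison: with pairwise uncorrelated projected noise, noise at
least `ν²` on non-critical tokens, noise in `(0, σ̄²]` on critical tokens, and `ν² ≥ σ̄²`,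
the expected-noise ratio between sequence-level and token-level unlearning is at least
`T / |K|`. -/
theorem stmt13 {Ω : Type*} [MeasurableSpace Ω] (μ : Measure Ω) [IsProbabilityMeasure μ]
    {d T : ℕ} (g : Fin T → Ω → EuclideanSpace ℝ (Fin d))
    (hmeas : ∀ i, Measurable (g i))
    (hL2 : ∀ i, Integrable (fun x => ‖g i x‖ ^ 2) μ)
    (W : Submodule ℝ (EuclideanSpace ℝ (Fin d)))
    (huncorr : ∀ i j, i ≠ j → ∫ x, ⟪Pproj W (g i x), Pproj W (g j x)⟫ ∂μ = 0)
    (K : Finset (Fin T)) (hK : K.Nonempty)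
    (ν : ℝ) (hν : ∀ i ∉ K, ν ^ 2 ≤ ∫ x, ‖Pproj W (g i x)‖ ^ 2 ∂μ)
    (σb : ℝ)
    (hσb : ∀ i ∈ K, (0 < ∫ x, ‖Pproj W (g i x)‖ ^ 2 ∂μ)
      ∧ (∫ x, ‖Pproj W (g i x)‖ ^ 2 ∂μ) ≤ σb ^ 2)
    (hνσ : σb ^ 2 ≤ ν ^ 2) :
    (T : ℝ) / K.card
      ≤ (∫ x, ‖Pproj W (∑ i, g i x)‖ ^ 2 ∂μ)
          / ∫ x, ‖Pproj W (∑ i ∈ K, g i x)‖ ^ 2 ∂μ := by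
  set f : Fin T → Ω → EuclideanSpace ℝ (Fin d) := fun i x => Pproj W (g i x) with hf
  have hfmeas : ∀ i, Measurable (f i) := fun i =>
    (Pproj W).continuous.measurable.comp (hmeas i)
  have hnorm : ∀ i x, ‖f i x‖ ≤ ‖g i x‖ := by
    intro i x
    have h1 : ‖f i x‖ = ‖(W.orthogonalProjectionOnto (g i x) : EuclideanSpace ℝ (Fin d))‖ := rfl
    rw [h1]
    calc ‖(W.orthogonalProjectionOnto (g i x) : EuclideanSpace ℝ (Fin d))‖
        ≤ ‖W.orthogonalProjectionOnto‖ * ‖g i x‖ := (W.orthogonalProjectionOnto).le_opNorm _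
      _ ≤ 1 * ‖g i x‖ := by
          exact mul_le_mul_of_nonneg_right (W.orthogonalProjectionOnto_norm_le) (norm_nonneg _)
      _ = ‖g i x‖ := one_mul _
  have hint : ∀ i j, Integrable (fun x => ⟪f i x, f j x⟫) μ := by
    intro i j
    have hm : AEStronglyMeasurable (fun x => ⟪f i x, f j x⟫) μ :=
      ((hfmeas i).inner (hfmeas j)).aestronglyMeasurable
    refine Integrable.mono' (((hL2 i).add (hL2 j)).div_const 2) hm ?_
    filter_upwards with x
    have h1 := abs_real_inner_le_norm (f i x) (f j x)
    have h2 : ‖f i x‖ * ‖f j x‖ ≤ ‖g i x‖ * ‖g j x‖ :=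
      mul_le_mul (hnorm i x) (hnorm j x) (norm_nonneg _) (norm_nonneg _)
    have h3 : ‖g i x‖ * ‖g j x‖ ≤ (‖g i x‖ ^ 2 + ‖g j x‖ ^ 2) / 2 := by
      nlinarith [sq_nonneg (‖g i x‖ - ‖g j x‖)]
    simp only [Pi.add_apply]
    rw [Real.norm_eq_abs]
    linarith
  have expand : ∀ s : Finset (Fin T),
      ∫ x, ‖Pproj W (∑ i ∈ s, g i x)‖ ^ 2 ∂μ = ∑ i ∈ s, ∫ x, ‖f i x‖ ^ 2 ∂μ := by
    intro s
    have h1 : ∀ x, ‖Pproj W (∑ i ∈ s, g i x)‖ ^ 2 = ∑ i ∈ s, ∑ j ∈ s, ⟪f i x, f j x⟫ := by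
      intro x
      rw [map_sum, ← real_inner_self_eq_norm_sq, sum_inner]
      exact Finset.sum_congr rfl fun i _ => inner_sum _ _ _
    simp_rw [h1]
    rw [integral_finset_sum _ (fun i _ => integrable_finset_sum _ (fun j _ => hint i j))]
    refine Finset.sum_congr rfl fun i hi => ?_
    rw [integral_finset_sum _ (fun j _ => hint i j),
      Finset.sum_eq_single_of_mem i hi (fun j _ hji => huncorr i j (Ne.symm hji))]
    exact integral_congr_ae (Filter.Eventually.of_forall fun x =>
      real_inner_self_eq_norm_sq _)
  have hexpK := expand K
  have hexpT := expand Finset.univ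
  set S : Fin T → ℝ := fun i => ∫ x, ‖f i x‖ ^ 2 ∂μ with hS
  have hD : 0 < ∑ i ∈ K, S i := Finset.sum_pos (fun i hi => (hσb i hi).1) hK
  have hDle : ∑ i ∈ K, S i ≤ (K.card : ℝ) * σb ^ 2 := by
    calc ∑ i ∈ K, S i ≤ ∑ _i ∈ K, σb ^ 2 :=
          Finset.sum_le_sum (fun i hi => (hσb i hi).2)
      _ = (K.card : ℝ) * σb ^ 2 := by rw [Finset.sum_const, nsmul_eq_mul]
  have hCge : ((T : ℝ) - K.card) * ν ^ 2 ≤ ∑ i ∈ Kᶜ, S i := by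
    have hc : (Kᶜ.card : ℝ) = (T : ℝ) - K.card := by
      rw [Finset.card_compl]
      have : K.card ≤ Fintype.card (Fin T) := Finset.card_le_univ K
      rw [Nat.cast_sub this, Fintype.card_fin]
    calc ((T : ℝ) - K.card) * ν ^ 2 = (Kᶜ.card : ℝ) * ν ^ 2 := by rw [hc]
      _ = ∑ _i ∈ Kᶜ, ν ^ 2 := by rw [Finset.sum_const, nsmul_eq_mul]
      _ ≤ ∑ i ∈ Kᶜ, S i :=
          Finset.sum_le_sum (fun i hi => hν i (Finset.mem_compl.mp hi))
  have hsplit : ∑ i, S i = ∑ i ∈ K, S i + ∑ i ∈ Kᶜ, S i :=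
    (Finset.sum_add_sum_compl K S).symm
  rw [hexpK, hexpT]
  have hk0 : (0 : ℝ) < (K.card : ℝ) := by
    exact_mod_cast Finset.card_pos.mpr hK
  rw [div_le_div_iff₀ hk0 hD]
  have hkT : (K.card : ℝ) ≤ T := by
    have := Finset.card_le_univ K
    rw [Fintype.card_fin] at this
    exact_mod_cast this
  rw [hsplit]
  nlinarith [mul_le_mul_of_nonneg_left hνσ (by linarith : (0:ℝ) ≤ (T:ℝ) - K.card),
    mul_le_mul_of_nonneg_left hCge (le_of_lt hk0),
    mul_le_mul_of_nonneg_left hDle (by linarith : (0:ℝ) ≤ (T:ℝ) - K.card)]
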